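/- Let 0 < θ < 1. There exists a constant C_θ > 0 such that for every u ∈ 𝒮(ℝⁿ): (∑_{j≥0} ‖ψ_j(D)u‖_{L^p(ℝⁿ)}^p)^{1/p} ≤ C_θ (∑_{j≥0} 2^{jθp} ∑_{k≥0} ‖φ_j(D_t) φ̃_k(D_x) u‖_{L^p(ℝⁿ)}^p)^{1/p}, where φ_j(D_t) acts as a Fourier multiplier in the first variable t and φ̃_k(D_x) in the remaining n−1 variables x. (In Besov-space language: ‖u‖_{B^0_p(ℝⁿ)} ≤ C_θ ‖u‖_{B^θ_p(ℝ, B^0_p(ℝ^{n−1}))}.) -/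

import Mathlib

/-!
Statement 14: Let 0 < θ < 1. There exists C_θ > 0 such that for every u ∈ 𝒮(ℝⁿ):
(∑_j ‖ψ_j(D)u‖_{L^p}^p)^{1/p}
  ≤ C_θ (∑_j 2^{jθp} ∑_k ‖φ_j(D_t) φ̃_k(D_x) u‖_{L^p}^p)^{1/p},
i.e. ‖u‖_{B⁰_p(ℝⁿ)} ≤ C_θ ‖u‖_{B^θ_p(ℝ, B⁰_p(ℝ^{n−1}))}, where {ψ_j} is the mixed
dyadic partition built from dyadic partitions {φ_j} on ℝ and {φ̃_k} on ℝ^{n−1}.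
Here ℝⁿ = ℝ_t × ℝ^{n−1}_x with ℝ^{n−1} modeled as ℝ^k.
-/

open MeasureTheory Real Complex Filter Topology ENNReal

noncomputable section

abbrev En (k : ℕ) := EuclideanSpace ℝ (Fin k)

/-- Dyadic partition on ℝ. -/
def dyadic1 (φ0 : ℝ → ℝ) : ℕ → ℝ → ℝ
  | 0 => φ0
  | (j + 1) => fun ξ => φ0 (((2 : ℝ) ^ (-(j + 1 : ℤ))) * ξ) - φ0 (((2 : ℝ) ^ (-(j : ℤ))) * ξ)

/-- Dyadic partition on ℝ^k. -/
def dyadicK (k : ℕ) (ψ0 : En k → ℝ) : ℕ → En k → ℝ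
  | 0 => ψ0
  | (j + 1) => fun ξ => ψ0 (((2 : ℝ) ^ (-(j + 1 : ℤ))) • ξ) - ψ0 (((2 : ℝ) ^ (-(j : ℤ))) • ξ)

/-- The mixed dyadic partition `ψ_j` on `ℝ × ℝ^k`. -/
def mixed (k : ℕ) (φ0 : ℝ → ℝ) (ψ0 : En k → ℝ) : ℕ → ℝ × En k → ℝ
  | 0 => fun q => φ0 q.1 * ψ0 q.2
  | (j + 1) => fun q =>
      dyadic1 φ0 (j + 1) q.1 * (∑ i ∈ Finset.range (j + 2), dyadicK k ψ0 i q.2) +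
      (∑ i ∈ Finset.range (j + 1), dyadic1 φ0 i q.1) * dyadicK k ψ0 (j + 1) q.2

/-- Inverse Fourier transform on the product `ℝ × ℝ^k`. -/
def invFTprod (k : ℕ) (χ : ℝ × En k → ℝ) (w : ℝ × En k) : ℂ :=
  ((2 * Real.pi) ^ (-(k + 1 : ℝ)) : ℝ) •
    ∫ q : ℝ × En k,
      Complex.exp (Complex.I * ((w.1 * q.1 + (inner ℝ w.2 q.2 : ℝ) : ℝ) : ℂ)) * (χ q : ℂ)

/-- Inverse Fourier transform on ℝ. -/
def invFT1 (φ : ℝ → ℝ) (t : ℝ) : ℂ :=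
  ((2 * Real.pi)⁻¹ : ℝ) • ∫ ξ : ℝ, Complex.exp (Complex.I * ((t * ξ : ℝ) : ℂ)) * (φ ξ : ℂ)

/-- Inverse Fourier transform on `ℝ^k`. -/
def invFTK (k : ℕ) (φ : En k → ℝ) (w : En k) : ℂ :=
  ((2 * Real.pi) ^ (-(k : ℝ)) : ℝ) •
    ∫ ξ : En k, Complex.exp (Complex.I * ((inner ℝ w ξ : ℝ) : ℂ)) * (φ ξ : ℂ)

/-- The dyadic block `ψ_j(D)w` on the product space. -/
def blockProd (k : ℕ) (φ0 : ℝ → ℝ) (ψ0 : En k → ℝ) (j : ℕ) (w : ℝ × En k → ℂ)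
    (x : ℝ × En k) : ℂ :=
  ∫ z : ℝ × En k, invFTprod k (mixed k φ0 ψ0 j) (x - z) * w z

/-- The Besov norm `B⁰_p(ℝⁿ)` with respect to the mixed partition. -/
def besovProd (k : ℕ) (φ0 : ℝ → ℝ) (ψ0 : En k → ℝ) (p : ℝ) (w : ℝ × En k → ℂ) : ℝ≥0∞ :=
  (∑' j : ℕ, eLpNorm (blockProd k φ0 ψ0 j w) (ENNReal.ofReal p) volume ^ p) ^ (1 / p)

/-- The mixed block `φ_j(D_t) φ̃_i(D_x) u`. -/
def blockJK (k : ℕ) (φ0 : ℝ → ℝ) (ψ0 : En k → ℝ) (j i : ℕ) (u : ℝ × En k → ℂ)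
    (x : ℝ × En k) : ℂ :=
  ∫ z : ℝ × En k, invFT1 (dyadic1 φ0 j) (x.1 - z.1) * invFTK k (dyadicK k ψ0 i) (x.2 - z.2) * u z

section AuxLemmas

open Finset

instance (k : ℕ) : (volume : Measure (ℝ × En k)).IsAddHaarMeasure :=
  inferInstanceAs ((volume.prod volume).IsAddHaarMeasure)

lemma norm_exp_I_mul (r : ℝ) : ‖Complex.exp (Complex.I * r)‖ = 1 := by
  simp [Complex.norm_exp]

lemma hcs_of_tsupport {E : Type*} [NormedAddCommGroup E] [ProperSpace E]
    {f : E → ℝ} (h : tsupport f ⊆ Metric.ball 0 2) : HasCompactSupport f :=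
  IsCompact.of_isClosed_subset (isCompact_closedBall 0 2) (isClosed_tsupport f)
    (h.trans Metric.ball_subset_closedBall)

lemma hcs_sub {α : Type*} [TopologicalSpace α] {f g : α → ℝ} (hf : HasCompactSupport f)
    (hg : HasCompactSupport g) : HasCompactSupport (fun x => f x - g x) :=
  (hf.add hg.neg : HasCompactSupport (f + (-g)))

lemma dyadic1_cont {φ0 : ℝ → ℝ} (h : Continuous φ0) (j : ℕ) : Continuous (dyadic1 φ0 j) := by
  cases j with
  | zero => exact h
  | succ j =>
      exact ((h.comp (continuous_const.mul continuous_id)).sub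
        (h.comp (continuous_const.mul continuous_id)))

lemma dyadicK_cont {k : ℕ} {ψ0 : En k → ℝ} (h : Continuous ψ0) (j : ℕ) :
    Continuous (dyadicK k ψ0 j) := by
  cases j with
  | zero => exact h
  | succ j =>
      exact ((h.comp (continuous_const_smul _)).sub (h.comp (continuous_const_smul _)))

lemma dyadic1_hcs {φ0 : ℝ → ℝ} (h : HasCompactSupport φ0) (j : ℕ) :
    HasCompactSupport (dyadic1 φ0 j) := by
  cases j with
  | zero => exact h
  | succ j =>
      refine hcs_sub ?_ ?_
      · exact h.comp_homeomorph
          (Homeomorph.smul (Units.mk0 ((2:ℝ) ^ (-(j + 1 : ℤ))) (by positivity)))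
      · exact h.comp_homeomorph
          (Homeomorph.smul (Units.mk0 ((2:ℝ) ^ (-(j : ℤ))) (by positivity)))

lemma dyadicK_hcs {k : ℕ} {ψ0 : En k → ℝ} (h : HasCompactSupport ψ0) (j : ℕ) :
    HasCompactSupport (dyadicK k ψ0 j) := by
  cases j with
  | zero => exact h
  | succ j =>
      refine hcs_sub ?_ ?_
      · exact h.comp_homeomorph
          (Homeomorph.smul (Units.mk0 ((2:ℝ) ^ (-(j + 1 : ℤ))) (by positivity)))
      · exact h.comp_homeomorph
          (Homeomorph.smul (Units.mk0 ((2:ℝ) ^ (-(j : ℤ))) (by positivity)))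

lemma dyadic1_integrable {φ0 : ℝ → ℝ} (hc : Continuous φ0)
    (hs : tsupport φ0 ⊆ Metric.ball 0 2) (j : ℕ) : Integrable (dyadic1 φ0 j) :=
  (dyadic1_cont hc j).integrable_of_hasCompactSupport
    (dyadic1_hcs (hcs_of_tsupport hs) j)

lemma dyadicK_integrable {k : ℕ} {ψ0 : En k → ℝ} (hc : Continuous ψ0)
    (hs : tsupport ψ0 ⊆ Metric.ball 0 2) (j : ℕ) : Integrable (dyadicK k ψ0 j) :=
  (dyadicK_cont hc j).integrable_of_hasCompactSupport
    (dyadicK_hcs (hcs_of_tsupport hs) j)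

lemma integrable_phase {α : Type*} [TopologicalSpace α] [MeasureSpace α]
    [OpensMeasurableSpace α] {r : α → ℝ} (hr : Continuous r) {φ : α → ℝ}
    (hφ : Integrable φ) :
    Integrable (fun ξ => Complex.exp (Complex.I * (r ξ : ℂ)) * (φ ξ : ℂ)) := by
  refine hφ.ofReal.bdd_mul (c := 1) ?_ (Filter.Eventually.of_forall fun x => le_of_eq (norm_exp_I_mul _))
  exact (Complex.continuous_exp.comp
    (continuous_const.mul (Complex.continuous_ofReal.comp hr))).aestronglyMeasurable

lemma norm_phase_integral_le {α : Type*} [MeasureSpace α] (r : α → ℝ) (φ : α → ℝ) :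
    ‖∫ ξ, Complex.exp (Complex.I * (r ξ : ℂ)) * (φ ξ : ℂ)‖ ≤ ∫ ξ, ‖φ ξ‖ := by
  refine (norm_integral_le_integral_norm _).trans (le_of_eq ?_)
  refine integral_congr_ae (Filter.Eventually.of_forall fun ξ => ?_)
  simp only [norm_mul, norm_exp_I_mul, one_mul, Complex.norm_real]

lemma norm_invFT1_le (φ : ℝ → ℝ) (t : ℝ) :
    ‖invFT1 φ t‖ ≤ (2 * Real.pi)⁻¹ * ∫ ξ, ‖φ ξ‖ := by
  have h2 : (0:ℝ) < 2 * Real.pi := by positivity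
  rw [invFT1, norm_smul, Real.norm_eq_abs,
    abs_of_pos (show (0:ℝ) < (2 * Real.pi)⁻¹ by positivity)]
  exact mul_le_mul_of_nonneg_left (norm_phase_integral_le _ _) (by positivity)

lemma norm_invFTK_le {k : ℕ} (φ : En k → ℝ) (w : En k) :
    ‖invFTK k φ w‖ ≤ (2 * Real.pi) ^ (-(k:ℝ)) * ∫ ξ, ‖φ ξ‖ := by
  have h2 : (0:ℝ) < 2 * Real.pi := by positivity
  rw [invFTK, norm_smul, Real.norm_eq_abs,
    abs_of_pos (show (0:ℝ) < (2 * Real.pi) ^ (-(k:ℝ)) by positivity)]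
  exact mul_le_mul_of_nonneg_left (norm_phase_integral_le _ _) (by positivity)

lemma continuous_invFT1 {φ : ℝ → ℝ} (hc : Continuous φ) (hi : Integrable φ) :
    Continuous (invFT1 φ) := by
  refine Continuous.const_smul ?_ ((2 * Real.pi)⁻¹)
  refine continuous_of_dominated (fun t => ?_) (fun t => Filter.Eventually.of_forall fun ξ => ?_)
    hi.norm (Filter.Eventually.of_forall fun ξ => ?_)
  · exact (integrable_phase (continuous_const.mul continuous_id) hi).aestronglyMeasurable
  · exact le_of_eq (by rw [norm_mul, norm_exp_I_mul, one_mul, Complex.norm_real])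
  · exact (Complex.continuous_exp.comp (continuous_const.mul
      (Complex.continuous_ofReal.comp (continuous_id.mul continuous_const)))).mul continuous_const

lemma continuous_invFTK {k : ℕ} {φ : En k → ℝ} (hc : Continuous φ) (hi : Integrable φ) :
    Continuous (invFTK k φ) := by
  refine Continuous.const_smul ?_ ((2 * Real.pi) ^ (-(k:ℝ)))
  refine continuous_of_dominated (fun w => ?_) (fun w => Filter.Eventually.of_forall fun ξ => ?_)
    hi.norm (Filter.Eventually.of_forall fun ξ => ?_)
  · exact (integrable_phase (Continuous.inner continuous_const continuous_id)
      hi).aestronglyMeasurable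
  · exact le_of_eq (by rw [norm_mul, norm_exp_I_mul, one_mul, Complex.norm_real])
  · exact (Complex.continuous_exp.comp (continuous_const.mul
      (Complex.continuous_ofReal.comp (Continuous.inner continuous_id
        continuous_const)))).mul continuous_const

end AuxLemmas
section FactorLemmas

open Finset

lemma invFT1_sum (s : Finset ℕ) (φ : ℕ → ℝ → ℝ) (hi : ∀ i ∈ s, Integrable (φ i)) (t : ℝ) :
    invFT1 (fun ξ => ∑ i ∈ s, φ i ξ) t = ∑ i ∈ s, invFT1 (φ i) t := by
  unfold invFT1
  rw [← Finset.smul_sum]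
  congr 1
  have h1 : (∫ ξ : ℝ, Complex.exp (Complex.I * ((t * ξ : ℝ) : ℂ)) * ((∑ i ∈ s, φ i ξ : ℝ) : ℂ))
      = ∫ ξ : ℝ, ∑ i ∈ s, Complex.exp (Complex.I * ((t * ξ : ℝ) : ℂ)) * ((φ i ξ : ℝ) : ℂ) := by
    refine integral_congr_ae (Filter.Eventually.of_forall fun ξ => ?_)
    simp only [Complex.ofReal_sum, Finset.mul_sum]
  rw [h1]
  exact integral_finset_sum s fun i hi' =>
    integrable_phase (continuous_const.mul continuous_id) (hi i hi')

lemma invFTK_sum {k : ℕ} (s : Finset ℕ) (φ : ℕ → En k → ℝ) (hi : ∀ i ∈ s, Integrable (φ i))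
    (w : En k) :
    invFTK k (fun ξ => ∑ i ∈ s, φ i ξ) w = ∑ i ∈ s, invFTK k (φ i) w := by
  unfold invFTK
  rw [← Finset.smul_sum]
  congr 1
  have h1 : (∫ ξ : En k, Complex.exp (Complex.I * ((inner ℝ w ξ : ℝ) : ℂ)) *
        ((∑ i ∈ s, φ i ξ : ℝ) : ℂ))
      = ∫ ξ : En k, ∑ i ∈ s, Complex.exp (Complex.I * ((inner ℝ w ξ : ℝ) : ℂ)) *
        ((φ i ξ : ℝ) : ℂ) := by
    refine integral_congr_ae (Filter.Eventually.of_forall fun ξ => ?_)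
    simp only [Complex.ofReal_sum, Finset.mul_sum]
  rw [h1]
  exact integral_finset_sum s fun i hi' =>
    integrable_phase (Continuous.inner continuous_const continuous_id) (hi i hi')

lemma invFTprod_mul {k : ℕ} (χ1 : ℝ → ℝ) (χ2 : En k → ℝ) (w : ℝ × En k) :
    invFTprod k (fun q => χ1 q.1 * χ2 q.2) w = invFT1 χ1 w.1 * invFTK k χ2 w.2 := by
  have h2 : (0:ℝ) < 2 * Real.pi := by positivity
  unfold invFTprod invFT1 invFTK
  have key : (∫ q : ℝ × En k,
        Complex.exp (Complex.I * ((w.1 * q.1 + (inner ℝ w.2 q.2 : ℝ) : ℝ) : ℂ)) *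
          ((χ1 q.1 * χ2 q.2 : ℝ) : ℂ))
      = (∫ t : ℝ, Complex.exp (Complex.I * ((w.1 * t : ℝ) : ℂ)) * (χ1 t : ℂ)) *
        (∫ x : En k, Complex.exp (Complex.I * (((inner ℝ w.2 x : ℝ) : ℝ) : ℂ)) * (χ2 x : ℂ)) := by
    rw [MeasureTheory.Measure.volume_eq_prod, ← integral_prod_mul]
    refine integral_congr_ae (Filter.Eventually.of_forall fun q => ?_)
    simp only [Complex.ofReal_add, mul_add, Complex.exp_add, Complex.ofReal_mul]
    ring
  rw [key, smul_mul_smul_comm]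
  congr 1
  rw [show -(↑k + 1 : ℝ) = (-1) + -(k:ℝ) by ring, Real.rpow_add h2, Real.rpow_neg_one]

lemma invFTprod_add {k : ℕ} {χ1 χ2 : ℝ × En k → ℝ} (h1 : Integrable χ1) (h2 : Integrable χ2)
    (w : ℝ × En k) :
    invFTprod k (fun q => χ1 q + χ2 q) w = invFTprod k χ1 w + invFTprod k χ2 w := by
  have hr : Continuous fun q : ℝ × En k => w.1 * q.1 + (inner ℝ w.2 q.2 : ℝ) :=
    (continuous_const.mul continuous_fst).add (Continuous.inner continuous_const continuous_snd)
  unfold invFTprod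
  rw [← smul_add]
  congr 1
  rw [← integral_add (integrable_phase hr h1) (integrable_phase hr h2)]
  refine integral_congr_ae (Filter.Eventually.of_forall fun q => ?_)
  simp only [Complex.ofReal_add, mul_add, Complex.ofReal_mul]

lemma mixed_invFT {k : ℕ} {φ0 : ℝ → ℝ} {ψ0 : En k → ℝ}
    (hc1 : Continuous φ0) (hs1 : tsupport φ0 ⊆ Metric.ball 0 2)
    (hc2 : Continuous ψ0) (hs2 : tsupport ψ0 ⊆ Metric.ball 0 2)
    (j : ℕ) (w : ℝ × En k) :
    invFTprod k (mixed k φ0 ψ0 j) w =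
      (∑ i ∈ Finset.range (j + 1), invFT1 (dyadic1 φ0 j) w.1 * invFTK k (dyadicK k ψ0 i) w.2) +
      ∑ i ∈ Finset.range j, invFT1 (dyadic1 φ0 i) w.1 * invFTK k (dyadicK k ψ0 j) w.2 := by
  have hint1 := dyadic1_integrable hc1 hs1
  have hint2 := dyadicK_integrable hc2 hs2 (k := k)
  cases j with
  | zero =>
      have h0 : invFTprod k (mixed k φ0 ψ0 0) w = invFT1 φ0 w.1 * invFTK k ψ0 w.2 :=
        invFTprod_mul φ0 ψ0 w
      simp only [h0, Finset.range_zero, Finset.sum_empty, add_zero, zero_add,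
        Finset.range_one, Finset.sum_singleton]
      rfl
  | succ j =>
      have hA : Integrable (fun q : ℝ × En k => dyadic1 φ0 (j+1) q.1 *
          (fun x : En k => ∑ i ∈ Finset.range (j+1+1), dyadicK k ψ0 i x) q.2) := by
        rw [MeasureTheory.Measure.volume_eq_prod]
        exact (hint1 (j+1)).mul_prod (integrable_finset_sum _ fun i _ => hint2 i)
      have hB : Integrable (fun q : ℝ × En k =>
          (fun t : ℝ => ∑ i ∈ Finset.range (j+1), dyadic1 φ0 i t) q.1 *
          dyadicK k ψ0 (j+1) q.2) := by
        rw [MeasureTheory.Measure.volume_eq_prod]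
        exact (integrable_finset_sum _ fun i _ => hint1 i).mul_prod (hint2 (j+1))
      have hmix : invFTprod k (mixed k φ0 ψ0 (j+1)) w =
          invFTprod k (fun q : ℝ × En k => dyadic1 φ0 (j+1) q.1 *
            (fun x : En k => ∑ i ∈ Finset.range (j+1+1), dyadicK k ψ0 i x) q.2) w +
          invFTprod k (fun q : ℝ × En k =>
            (fun t : ℝ => ∑ i ∈ Finset.range (j+1), dyadic1 φ0 i t) q.1 *
            dyadicK k ψ0 (j+1) q.2) w :=
        invFTprod_add hA hB w
      have e1 := invFTprod_mul (k := k) (dyadic1 φ0 (j+1))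
        (fun x : En k => ∑ i ∈ Finset.range (j+1+1), dyadicK k ψ0 i x) w
      have e2 := invFTprod_mul (k := k)
        (fun t : ℝ => ∑ i ∈ Finset.range (j+1), dyadic1 φ0 i t) (dyadicK k ψ0 (j+1)) w
      have e3 : invFTK k (fun x : En k => ∑ i ∈ Finset.range (j+1+1), dyadicK k ψ0 i x) w.2
          = ∑ i ∈ Finset.range (j+1+1), invFTK k (dyadicK k ψ0 i) w.2 :=
        invFTK_sum (Finset.range (j+1+1)) (fun i => dyadicK k ψ0 i) (fun i _ => hint2 i) w.2
      have e4 : invFT1 (fun t : ℝ => ∑ i ∈ Finset.range (j+1), dyadic1 φ0 i t) w.1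
          = ∑ i ∈ Finset.range (j+1), invFT1 (dyadic1 φ0 i) w.1 :=
        invFT1_sum (Finset.range (j+1)) (fun i => dyadic1 φ0 i) (fun i _ => hint1 i) w.1
      rw [hmix, e1, e2, e3, e4, Finset.mul_sum, Finset.sum_mul]

end FactorLemmas
section BlockLemmas

open Finset

lemma term_integrable {k : ℕ} {φ0 : ℝ → ℝ} {ψ0 : En k → ℝ}
    (hc1 : Continuous φ0) (hs1 : tsupport φ0 ⊆ Metric.ball 0 2)
    (hc2 : Continuous ψ0) (hs2 : tsupport ψ0 ⊆ Metric.ball 0 2)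
    (u : SchwartzMap (ℝ × En k) ℂ) (a b : ℕ) (x : ℝ × En k) :
    Integrable (fun z : ℝ × En k =>
      invFT1 (dyadic1 φ0 a) (x.1 - z.1) * invFTK k (dyadicK k ψ0 b) (x.2 - z.2) * u z) := by
  refine u.integrable.bdd_mul (c := ((2*Real.pi)⁻¹ * ∫ ξ, ‖dyadic1 φ0 a ξ‖) *
      ((2*Real.pi) ^ (-(k:ℝ)) * ∫ ξ, ‖dyadicK k ψ0 b ξ‖)) ?_ ?_
  · exact (((continuous_invFT1 (dyadic1_cont hc1 a) (dyadic1_integrable hc1 hs1 a)).comp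
      (continuous_const.sub continuous_fst)).mul
      ((continuous_invFTK (dyadicK_cont hc2 b) (dyadicK_integrable hc2 hs2 b)).comp
      (continuous_const.sub continuous_snd))).aestronglyMeasurable
  · refine Filter.Eventually.of_forall fun z => ?_
    rw [norm_mul]
    exact mul_le_mul (norm_invFT1_le _ _) (norm_invFTK_le _ _) (norm_nonneg _)
      (mul_nonneg (by positivity) (integral_nonneg fun ξ => norm_nonneg _))

lemma blockJK_continuous {k : ℕ} {φ0 : ℝ → ℝ} {ψ0 : En k → ℝ}
    (hc1 : Continuous φ0) (hs1 : tsupport φ0 ⊆ Metric.ball 0 2)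
    (hc2 : Continuous ψ0) (hs2 : tsupport ψ0 ⊆ Metric.ball 0 2)
    (u : SchwartzMap (ℝ × En k) ℂ) (a b : ℕ) :
    Continuous (blockJK k φ0 ψ0 a b ⇑u) := by
  unfold blockJK
  set M1 : ℝ := (2*Real.pi)⁻¹ * ∫ ξ, ‖dyadic1 φ0 a ξ‖ with hM1
  set M2 : ℝ := (2*Real.pi) ^ (-(k:ℝ)) * ∫ ξ, ‖dyadicK k ψ0 b ξ‖ with hM2
  refine continuous_of_dominated
    (fun x => (term_integrable hc1 hs1 hc2 hs2 u a b x).aestronglyMeasurable)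
    (fun x => Filter.Eventually.of_forall fun z => ?_)
    ((u.integrable.norm).const_mul (M1 * M2))
    (Filter.Eventually.of_forall fun z => ?_)
  · rw [norm_mul, norm_mul]
    have h1 : ‖invFT1 (dyadic1 φ0 a) (x.1 - z.1)‖ * ‖invFTK k (dyadicK k ψ0 b) (x.2 - z.2)‖
        ≤ M1 * M2 :=
      mul_le_mul (norm_invFT1_le _ _) (norm_invFTK_le _ _) (norm_nonneg _)
        (hM1 ▸ mul_nonneg (by positivity) (integral_nonneg fun ξ => norm_nonneg _))
    exact mul_le_mul_of_nonneg_right h1 (norm_nonneg _)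
  · exact (((continuous_invFT1 (dyadic1_cont hc1 a) (dyadic1_integrable hc1 hs1 a)).comp
      (continuous_fst.sub continuous_const)).mul
      ((continuous_invFTK (dyadicK_cont hc2 b) (dyadicK_integrable hc2 hs2 b)).comp
      (continuous_snd.sub continuous_const))).mul continuous_const

lemma blockProd_eq {k : ℕ} {φ0 : ℝ → ℝ} {ψ0 : En k → ℝ}
    (hc1 : Continuous φ0) (hs1 : tsupport φ0 ⊆ Metric.ball 0 2)
    (hc2 : Continuous ψ0) (hs2 : tsupport ψ0 ⊆ Metric.ball 0 2)
    (u : SchwartzMap (ℝ × En k) ℂ) (j : ℕ) (x : ℝ × En k) :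
    blockProd k φ0 ψ0 j ⇑u x =
      (∑ i ∈ Finset.range (j + 1), blockJK k φ0 ψ0 j i ⇑u x) +
      ∑ i ∈ Finset.range j, blockJK k φ0 ψ0 i j ⇑u x := by
  unfold blockProd blockJK
  have step1 : (∫ z : ℝ × En k, invFTprod k (mixed k φ0 ψ0 j) (x - z) * u z)
      = ∫ z : ℝ × En k,
        ((∑ i ∈ Finset.range (j + 1),
          invFT1 (dyadic1 φ0 j) (x.1 - z.1) * invFTK k (dyadicK k ψ0 i) (x.2 - z.2) * u z) +
        ∑ i ∈ Finset.range j,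
          invFT1 (dyadic1 φ0 i) (x.1 - z.1) * invFTK k (dyadicK k ψ0 j) (x.2 - z.2) * u z) := by
    refine integral_congr_ae (Filter.Eventually.of_forall fun z => ?_)
    show invFTprod k (mixed k φ0 ψ0 j) (x - z) * u z = _
    rw [mixed_invFT hc1 hs1 hc2 hs2 j (x - z)]
    simp only [Prod.fst_sub, Prod.snd_sub, add_mul, Finset.sum_mul]
  rw [step1, integral_add
    (integrable_finset_sum _ fun i _ => term_integrable hc1 hs1 hc2 hs2 u j i x)
    (integrable_finset_sum _ fun i _ => term_integrable hc1 hs1 hc2 hs2 u i j x),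
    integral_finset_sum _ (fun i _ => term_integrable hc1 hs1 hc2 hs2 u j i x),
    integral_finset_sum _ (fun i _ => term_integrable hc1 hs1 hc2 hs2 u i j x)]

lemma eLpNorm_blockProd_le {k : ℕ} {φ0 : ℝ → ℝ} {ψ0 : En k → ℝ} {p : ℝ}
    (hc1 : Continuous φ0) (hs1 : tsupport φ0 ⊆ Metric.ball 0 2)
    (hc2 : Continuous ψ0) (hs2 : tsupport ψ0 ⊆ Metric.ball 0 2)
    (hP : 1 ≤ ENNReal.ofReal p)
    (u : SchwartzMap (ℝ × En k) ℂ) (j : ℕ) :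
    eLpNorm (blockProd k φ0 ψ0 j ⇑u) (ENNReal.ofReal p) volume ≤
      (∑ i ∈ Finset.range (j + 1),
        eLpNorm (blockJK k φ0 ψ0 j i ⇑u) (ENNReal.ofReal p) volume) +
      ∑ i ∈ Finset.range j,
        eLpNorm (blockJK k φ0 ψ0 i j ⇑u) (ENNReal.ofReal p) volume := by
  have hfun : blockProd k φ0 ψ0 j ⇑u =
      (∑ i ∈ Finset.range (j + 1), blockJK k φ0 ψ0 j i ⇑u) +
      ∑ i ∈ Finset.range j, blockJK k φ0 ψ0 i j ⇑u := by
    funext x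
    rw [blockProd_eq hc1 hs1 hc2 hs2 u j x]
    simp [Finset.sum_apply]
  rw [hfun]
  refine (eLpNorm_add_le ?_ ?_ hP).trans (add_le_add ?_ ?_)
  · rw [Finset.sum_fn]
    exact Finset.aestronglyMeasurable_fun_sum _ fun i _ =>
      (blockJK_continuous hc1 hs1 hc2 hs2 u j i).aestronglyMeasurable
  · rw [Finset.sum_fn]
    exact Finset.aestronglyMeasurable_fun_sum _ fun i _ =>
      (blockJK_continuous hc1 hs1 hc2 hs2 u i j).aestronglyMeasurable
  · exact eLpNorm_sum_le (fun i _ =>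
      (blockJK_continuous hc1 hs1 hc2 hs2 u j i).aestronglyMeasurable) hP
  · exact eLpNorm_sum_le (fun i _ =>
      (blockJK_continuous hc1 hs1 hc2 hs2 u i j).aestronglyMeasurable) hP

end BlockLemmas
section ENNRealLemmas

open Finset Filter

lemma poly_le_exp (e s : ℝ) (hs : 0 < s) :
    ∃ C : ℝ, 0 < C ∧ ∀ j : ℕ, ((j:ℝ) + 1) ^ e ≤ C * (2:ℝ) ^ ((j:ℝ) * s) := by
  set m := ⌈e⌉₊ with hm
  set r : ℝ := (2:ℝ) ^ s with hr
  have hr1 : 1 < r := by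
    rw [hr]
    exact (Real.one_lt_rpow_iff_of_pos (by norm_num)).2 (Or.inl ⟨one_lt_two, hs⟩)
  have hr0 : 0 < r := lt_trans one_pos hr1
  have h0 : Tendsto (fun n : ℕ => ((n:ℝ)) ^ m / r ^ n) atTop (nhds 0) :=
    tendsto_pow_const_div_const_pow_of_one_lt m hr1
  have h1 : Tendsto (fun n : ℕ => ((n:ℝ) + 1) ^ m / r ^ n) atTop (nhds 0) := by
    have h2 : Tendsto (fun n : ℕ => (((n + 1 : ℕ):ℝ)) ^ m / r ^ (n + 1)) atTop (nhds 0) :=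
      (Filter.tendsto_add_atTop_iff_nat 1).2 h0
    have h3 := h2.mul_const r
    rw [zero_mul] at h3
    refine h3.congr fun n => ?_
    push_cast
    rw [pow_succ]
    field_simp
  obtain ⟨C, hC⟩ := h1.bddAbove_range
  refine ⟨max C 1, lt_of_lt_of_le one_pos (le_max_right _ _), fun j => ?_⟩
  have hCj : ((j:ℝ) + 1) ^ m / r ^ j ≤ max C 1 :=
    le_trans (hC (Set.mem_range_self j)) (le_max_left _ _)
  have hle : ((j:ℝ) + 1) ^ e ≤ ((j:ℝ) + 1) ^ (m:ℝ) :=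
    Real.rpow_le_rpow_of_exponent_le (by linarith [Nat.cast_nonneg (α := ℝ) j])
      (Nat.le_ceil e)
  rw [Real.rpow_natCast] at hle
  have hrj : r ^ j = (2:ℝ) ^ ((j:ℝ) * s) := by
    rw [hr, ← Real.rpow_natCast ((2:ℝ) ^ s) j, ← Real.rpow_mul (by norm_num), mul_comm]
  calc ((j:ℝ) + 1) ^ e ≤ ((j:ℝ) + 1) ^ m := hle
    _ = (((j:ℝ) + 1) ^ m / r ^ j) * r ^ j := by field_simp
    _ ≤ max C 1 * r ^ j := mul_le_mul_of_nonneg_right hCj (le_of_lt (pow_pos hr0 j))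
    _ = max C 1 * (2:ℝ) ^ ((j:ℝ) * s) := by rw [hrj]

lemma ennreal_add_rpow_le {p : ℝ} (hp : 0 ≤ p) (a b : ℝ≥0∞) :
    (a + b) ^ p ≤ (2:ℝ≥0∞) ^ p * (a ^ p + b ^ p) := by
  rcases le_total a b with h | h
  · calc (a + b) ^ p ≤ (2 * b) ^ p := by
          refine ENNReal.rpow_le_rpow ?_ hp
          rw [two_mul]
          exact add_le_add_left h b
      _ = 2 ^ p * b ^ p := ENNReal.mul_rpow_of_nonneg 2 b hp
      _ ≤ 2 ^ p * (a ^ p + b ^ p) := mul_le_mul_right le_add_self _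
  · calc (a + b) ^ p ≤ (2 * a) ^ p := by
          refine ENNReal.rpow_le_rpow ?_ hp
          rw [two_mul]
          exact add_le_add_right h a
      _ = 2 ^ p * a ^ p := ENNReal.mul_rpow_of_nonneg 2 a hp
      _ ≤ 2 ^ p * (a ^ p + b ^ p) := mul_le_mul_right le_self_add _

lemma ennreal_sum_rpow_le {p : ℝ} (hp : 1 ≤ p) (m : ℕ) (z : ℕ → ℝ≥0∞) :
    (∑ i ∈ Finset.range (m + 1), z i) ^ p ≤
      ((m + 1 : ℕ) : ℝ≥0∞) ^ (p - 1) * ∑ i ∈ Finset.range (m + 1), z i ^ p := by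
  set N : ℝ≥0∞ := ((m + 1 : ℕ) : ℝ≥0∞) with hN
  have hN0 : N ≠ 0 := by simp [hN]
  have hNt : N ≠ ⊤ := ENNReal.natCast_ne_top _
  have hw : ∑ _i ∈ Finset.range (m + 1), N⁻¹ = 1 := by
    rw [Finset.sum_const, Finset.card_range, nsmul_eq_mul, ← hN,
      ENNReal.mul_inv_cancel hN0 hNt]
  have key := ENNReal.rpow_arith_mean_le_arith_mean_rpow (Finset.range (m + 1))
    (fun _ => N⁻¹) (fun i => N * z i) hw hp
  have hL : ∀ i ∈ Finset.range (m + 1), N⁻¹ * (N * z i) = z i := fun i _ => by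
    rw [← mul_assoc, ENNReal.inv_mul_cancel hN0 hNt, one_mul]
  rw [Finset.sum_congr rfl hL] at key
  have hNp : N⁻¹ * N ^ p = N ^ (p - 1) := by
    rw [show p - 1 = p + (-1) by ring, ENNReal.rpow_add p (-1) hN0 hNt,
      ENNReal.rpow_neg_one, mul_comm]
  refine key.trans (le_of_eq ?_)
  rw [Finset.mul_sum]
  refine Finset.sum_congr rfl fun i _ => ?_
  rw [ENNReal.mul_rpow_of_nonneg N (z i) (by linarith), ← mul_assoc, hNp]

end ENNRealLemmas
theorem statement_14 (k : ℕ) (p θ : ℝ) (hp : 1 < p) (hθ : 0 < θ) (hθ1 : θ < 1)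
    (φ0 : ℝ → ℝ) (hsm1 : ContDiff ℝ (⊤ : ℕ∞) φ0)
    (hsupp1 : tsupport φ0 ⊆ Metric.ball 0 2)
    (hrange1 : ∀ ξ, 0 ≤ φ0 ξ ∧ φ0 ξ ≤ 1)
    (hone1 : Metric.closedBall (0 : ℝ) 1 ⊆ interior {ξ : ℝ | φ0 ξ = 1})
    (ψ0 : En k → ℝ) (hsm2 : ContDiff ℝ (⊤ : ℕ∞) ψ0)
    (hsupp2 : tsupport ψ0 ⊆ Metric.ball 0 2)
    (hrange2 : ∀ ξ, 0 ≤ ψ0 ξ ∧ ψ0 ξ ≤ 1)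
    (hone2 : Metric.closedBall (0 : En k) 1 ⊆ interior {ξ : En k | ψ0 ξ = 1}) :
    ∃ C : ℝ, 0 < C ∧ ∀ u : SchwartzMap (ℝ × En k) ℂ,
      besovProd k φ0 ψ0 p (⇑u)
        ≤ ENNReal.ofReal C *
          (∑' j : ℕ, ENNReal.ofReal ((2 : ℝ) ^ ((j : ℝ) * θ * p)) *
              ∑' i : ℕ,
                eLpNorm (blockJK k φ0 ψ0 j i (⇑u)) (ENNReal.ofReal p) volume ^ p) ^ (1 / p) := by
  have hp0 : (0:ℝ) < p := lt_trans one_pos hp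
  have hp0' : p ≠ 0 := ne_of_gt hp0
  have hP1 : (1:ℝ≥0∞) ≤ ENNReal.ofReal p := ENNReal.one_le_ofReal.2 hp.le
  have hc1 : Continuous φ0 := hsm1.continuous
  have hc2 : Continuous ψ0 := hsm2.continuous
  obtain ⟨Ca, hCa0, hCa⟩ := poly_le_exp (p - 1) (θ * p) (by positivity)
  set g : ℝ := (2:ℝ) ^ (-θ) with hg
  have hg0 : 0 < g := Real.rpow_pos_of_pos (by norm_num) _
  have hg1 : g < 1 := by
    rw [hg]
    exact Real.rpow_lt_one_of_one_lt_of_neg one_lt_two (by linarith)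
  set Kr : ℝ := (1 - g)⁻¹ with hKr
  have hKr0 : 0 < Kr := by rw [hKr]; exact inv_pos.2 (by linarith)
  set D : ℝ≥0∞ := (2:ℝ≥0∞) ^ p * (ENNReal.ofReal Ca + ENNReal.ofReal (Kr ^ p)) with hD
  have hDt : D ≠ ⊤ := by
    rw [hD]
    exact ENNReal.mul_ne_top (ENNReal.rpow_ne_top_of_nonneg hp0.le (by norm_num))
      (ENNReal.add_ne_top.2 ⟨ENNReal.ofReal_ne_top, ENNReal.ofReal_ne_top⟩)
  have hD0 : D ≠ 0 := by
    rw [hD]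
    refine mul_ne_zero (ENNReal.rpow_pos (by norm_num) (by norm_num)).ne' ?_
    exact (lt_of_lt_of_le (ENNReal.ofReal_pos.2 hCa0) le_self_add).ne'
  have hDr : 0 < D.toReal := ENNReal.toReal_pos hD0 hDt
  refine ⟨D.toReal ^ (1/p) + 1, by positivity, fun u => ?_⟩
  rw [besovProd]
  set P : ℝ≥0∞ := ENNReal.ofReal p with hP
  set n : ℕ → ℕ → ℝ≥0∞ := fun j i => eLpNorm (blockJK k φ0 ψ0 j i ⇑u) P volume with hn
  set A : ℕ → ℝ≥0∞ := fun j => ∑ i ∈ Finset.range (j + 1), n j i with hA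
  set B : ℕ → ℝ≥0∞ := fun j => ∑ i ∈ Finset.range j, n i j with hB
  set R : ℝ≥0∞ :=
    ∑' j : ℕ, ENNReal.ofReal ((2:ℝ) ^ ((j : ℝ) * θ * p)) * ∑' i : ℕ, n j i ^ p with hR
  have step1 : ∀ j, eLpNorm (blockProd k φ0 ψ0 j ⇑u) P volume ≤ A j + B j := fun j =>
    eLpNorm_blockProd_le hc1 hsupp1 hc2 hsupp2 hP1 u j
  have hAp : ∀ j : ℕ, (A j) ^ p ≤ ENNReal.ofReal Ca *
      (ENNReal.ofReal ((2:ℝ) ^ ((j : ℝ) * θ * p)) * ∑' i : ℕ, n j i ^ p) := by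
    intro j
    have h1 := ennreal_sum_rpow_le hp.le j (fun i => n j i)
    refine (h1.trans ?_)
    have h2 : ((j + 1 : ℕ) : ℝ≥0∞) ^ (p - 1) ≤
        ENNReal.ofReal (Ca * (2:ℝ) ^ ((j : ℝ) * θ * p)) := by
      rw [← ENNReal.ofReal_natCast (j + 1), ENNReal.ofReal_rpow_of_pos (by positivity)]
      refine ENNReal.ofReal_le_ofReal ?_
      have h3 := hCa j
      rw [show (j:ℝ) * θ * p = (j:ℝ) * (θ * p) by ring]
      push_cast
      exact h3
    refine (mul_le_mul' h2 (ENNReal.sum_le_tsum _)).trans_eq ?_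
    rw [ENNReal.ofReal_mul hCa0.le, mul_assoc]
  have hBp : ∀ j : ℕ, (B j) ^ p ≤ ENNReal.ofReal (Kr ^ p) *
      ∑' i : ℕ, ENNReal.ofReal ((2:ℝ) ^ ((i : ℝ) * θ * p)) * n i j ^ p := by
    intro j
    set T : ℝ≥0∞ := ∑' i : ℕ, ENNReal.ofReal ((2:ℝ) ^ ((i : ℝ) * θ * p)) * n i j ^ p with hT
    set M : ℝ≥0∞ := T ^ (1/p) with hM
    have hMp : M ^ p = T := by
      rw [hM, ← ENNReal.rpow_mul, one_div, inv_mul_cancel₀ hp0', ENNReal.rpow_one]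
    have claim1 : ∀ i : ℕ, ENNReal.ofReal ((2:ℝ) ^ ((i : ℝ) * θ)) * n i j ≤ M := by
      intro i
      have e1 : (ENNReal.ofReal ((2:ℝ) ^ ((i : ℝ) * θ)) * n i j) ^ p
          = ENNReal.ofReal ((2:ℝ) ^ ((i : ℝ) * θ * p)) * n i j ^ p := by
        rw [ENNReal.mul_rpow_of_nonneg _ _ hp0.le,
          ENNReal.ofReal_rpow_of_pos (by positivity),
          ← Real.rpow_mul (by norm_num : (0:ℝ) ≤ 2)]
      have e2 : (ENNReal.ofReal ((2:ℝ) ^ ((i : ℝ) * θ)) * n i j) ^ p ≤ T := by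
        rw [e1, hT]
        exact ENNReal.le_tsum i
      have e3 := ENNReal.rpow_le_rpow e2 (by positivity : (0:ℝ) ≤ 1/p)
      rwa [← ENNReal.rpow_mul, mul_one_div_cancel hp0', ENNReal.rpow_one, ← hM] at e3
    have claim2 : B j ≤ ENNReal.ofReal Kr * M := by
      have hterm : ∀ i : ℕ, n i j ≤ ENNReal.ofReal ((2:ℝ) ^ (-(i : ℝ) * θ)) * M := by
        intro i
        have h1 : (1:ℝ≥0∞) = ENNReal.ofReal ((2:ℝ) ^ (-(i : ℝ) * θ)) *
            ENNReal.ofReal ((2:ℝ) ^ ((i : ℝ) * θ)) := by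
          rw [← ENNReal.ofReal_mul (by positivity),
            ← Real.rpow_add (by norm_num : (0:ℝ) < 2)]
          norm_num
        calc n i j = 1 * n i j := (one_mul _).symm
          _ = ENNReal.ofReal ((2:ℝ) ^ (-(i : ℝ) * θ)) *
              (ENNReal.ofReal ((2:ℝ) ^ ((i : ℝ) * θ)) * n i j) := by rw [h1, mul_assoc]
          _ ≤ ENNReal.ofReal ((2:ℝ) ^ (-(i : ℝ) * θ)) * M := mul_le_mul_right (claim1 i) _
      calc B j ≤ ∑ i ∈ Finset.range j, ENNReal.ofReal ((2:ℝ) ^ (-(i : ℝ) * θ)) * M :=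
            Finset.sum_le_sum fun i _ => hterm i
        _ = (∑ i ∈ Finset.range j, ENNReal.ofReal ((2:ℝ) ^ (-(i : ℝ) * θ))) * M :=
            (Finset.sum_mul _ _ _).symm
        _ ≤ ENNReal.ofReal Kr * M := by
            refine mul_le_mul_left ?_ M
            rw [← ENNReal.ofReal_sum_of_nonneg (fun i _ => by positivity)]
            refine ENNReal.ofReal_le_ofReal ?_
            have hgeom : ∀ i : ℕ, (2:ℝ) ^ (-(i : ℝ) * θ) = g ^ i := by
              intro i
              rw [hg, ← Real.rpow_natCast ((2:ℝ) ^ (-θ)) i,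
                ← Real.rpow_mul (by norm_num : (0:ℝ) ≤ 2)]
              congr 1
              ring
            rw [Finset.sum_congr rfl fun i _ => hgeom i]
            refine le_trans (Summable.sum_le_tsum (Finset.range j) (fun i _ => by positivity)
              (summable_geometric_of_lt_one hg0.le hg1)) ?_
            rw [tsum_geometric_of_lt_one hg0.le hg1, hKr]
    calc (B j) ^ p ≤ (ENNReal.ofReal Kr * M) ^ p := ENNReal.rpow_le_rpow claim2 hp0.le
      _ = ENNReal.ofReal (Kr ^ p) * T := by
          rw [ENNReal.mul_rpow_of_nonneg _ _ hp0.le, hMp, ENNReal.ofReal_rpow_of_pos hKr0]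
  have main : (∑' j : ℕ, eLpNorm (blockProd k φ0 ψ0 j ⇑u) P volume ^ p) ≤ D * R := by
    have t1 : ∀ j : ℕ, eLpNorm (blockProd k φ0 ψ0 j ⇑u) P volume ^ p
        ≤ (2:ℝ≥0∞) ^ p * ((A j) ^ p + (B j) ^ p) :=
      fun j => (ENNReal.rpow_le_rpow (step1 j) hp0.le).trans (ennreal_add_rpow_le hp0.le _ _)
    refine (ENNReal.tsum_le_tsum t1).trans ?_
    rw [ENNReal.tsum_mul_left, ENNReal.tsum_add]
    have t2 : (∑' j : ℕ, (A j) ^ p) ≤ ENNReal.ofReal Ca * R := by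
      refine (ENNReal.tsum_le_tsum hAp).trans_eq ?_
      rw [ENNReal.tsum_mul_left]
    have t3 : (∑' j : ℕ, (B j) ^ p) ≤ ENNReal.ofReal (Kr ^ p) * R := by
      refine (ENNReal.tsum_le_tsum hBp).trans_eq ?_
      rw [ENNReal.tsum_mul_left]
      congr 1
      calc ∑' j : ℕ, ∑' i : ℕ, ENNReal.ofReal ((2:ℝ) ^ ((i : ℝ) * θ * p)) * n i j ^ p
          = ∑' i : ℕ, ∑' j : ℕ, ENNReal.ofReal ((2:ℝ) ^ ((i : ℝ) * θ * p)) * n i j ^ p :=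
            ENNReal.tsum_comm
        _ = ∑' i : ℕ, ENNReal.ofReal ((2:ℝ) ^ ((i : ℝ) * θ * p)) * ∑' j : ℕ, n i j ^ p :=
            tsum_congr fun i => ENNReal.tsum_mul_left
        _ = R := rfl
    calc (2:ℝ≥0∞) ^ p * ((∑' j : ℕ, (A j) ^ p) + ∑' j : ℕ, (B j) ^ p)
        ≤ (2:ℝ≥0∞) ^ p * (ENNReal.ofReal Ca * R + ENNReal.ofReal (Kr ^ p) * R) :=
          mul_le_mul_right (add_le_add t2 t3) _
      _ = D * R := by rw [hD, ← add_mul, mul_assoc]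
  have final := ENNReal.rpow_le_rpow main (by positivity : (0:ℝ) ≤ 1/p)
  rw [ENNReal.mul_rpow_of_nonneg _ _ (by positivity : (0:ℝ) ≤ 1/p)] at final
  refine final.trans (mul_le_mul_left ?_ _)
  calc D ^ (1/p) = ENNReal.ofReal D.toReal ^ (1/p) := by rw [ENNReal.ofReal_toReal hDt]
    _ = ENNReal.ofReal (D.toReal ^ (1/p)) := ENNReal.ofReal_rpow_of_pos hDr
    _ ≤ ENNReal.ofReal (D.toReal ^ (1/p) + 1) := ENNReal.ofReal_le_ofReal (by linarith)

end
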